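/- Let λ ≠ 0, m ≠ 1 be real constants and fix ε ∈ ℝ. If φ : ℝ × ℝ → ℝ is a positive differentiable solution of u_t + u^{1−m}·u_x + λ·u^m = 0 on ℝ², then the function ψ(x,t) = (φ(x + ε t, t)^{1−m} − ε)^{1/(1−m)} satisfies the same equation at every point (x,t) where φ(x + ε t, t)^{1−m} − ε > 0. -/

import Mathlib

open Real

/-- case k = 1−m. If φ is a positive differentiable solution of
`u_t + u^{1−m}·u_x + λ·u^m = 0` on ℝ², then
`ψ(x,t) = (φ(x + εt, t)^{1−m} − ε)^{1/(1−m)}` satisfies the same equation at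
every point where `φ(x + εt, t)^{1−m} − ε > 0`. -/
theorem case3_G6_transformation
    (lam m : ℝ) (hlam : lam ≠ 0) (hm : m ≠ 1) (ε : ℝ)
    (φ : ℝ × ℝ → ℝ)
    (hφ : Differentiable ℝ φ)
    (hpos : ∀ x t : ℝ, 0 < φ (x, t))
    (hsol : ∀ x t : ℝ,
      fderiv ℝ φ (x, t) (0, 1) + φ (x, t) ^ (1 - m) * fderiv ℝ φ (x, t) (1, 0)
        + lam * φ (x, t) ^ m = 0) :
    ∀ ψ : ℝ × ℝ → ℝ,
      ψ = (fun p : ℝ × ℝ =>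
        (φ (p.1 + ε * p.2, p.2) ^ (1 - m) - ε) ^ (1 / (1 - m))) →
      ∀ x t : ℝ,
        0 < φ (x + ε * t, t) ^ (1 - m) - ε →
        DifferentiableAt ℝ ψ (x, t) ∧
        fderiv ℝ ψ (x, t) (0, 1) + ψ (x, t) ^ (1 - m) * fderiv ℝ ψ (x, t) (1, 0)
          + lam * ψ (x, t) ^ m = 0 := by
  intro ψ hψ x t hpt
  -- notation
  set y := x + ε * t with hy
  set u : ℝ := φ (y, t) with hu
  have hupos : 0 < u := hpos y t
  set h₀ : ℝ := u ^ (1 - m) - ε with hh0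
  have hh0pos : 0 < h₀ := hpt
  set L := fderiv ℝ φ (y, t) with hL
  have hφd : HasFDerivAt φ L (y, t) := (hφ (y, t)).hasFDerivAt
  -- the linear change of variables
  set A : ℝ × ℝ →L[ℝ] ℝ × ℝ :=
    (ContinuousLinearMap.fst ℝ ℝ ℝ + ε • ContinuousLinearMap.snd ℝ ℝ ℝ).prod
      (ContinuousLinearMap.snd ℝ ℝ ℝ) with hA
  have hAapp : ∀ p : ℝ × ℝ, A p = (p.1 + ε * p.2, p.2) := by
    intro p; simp [hA, Prod.ext_iff, smul_eq_mul]
  -- derivative of g p = φ (p.1 + ε p.2, p.2)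
  have hg : HasFDerivAt (fun p : ℝ × ℝ => φ (p.1 + ε * p.2, p.2)) (L.comp A) (x, t) := by
    have h1 : HasFDerivAt A A (x, t) := A.hasFDerivAt
    have h2 : HasFDerivAt φ L (A (x, t)) := by rw [hAapp]; exact hφd
    have := h2.comp (x, t) h1
    rw [show (fun p : ℝ × ℝ => φ (p.1 + ε * p.2, p.2)) = φ ∘ A from funext fun p => by simp [hAapp]]
    exact this
  -- derivative of h p = g p ^ (1-m) - ε
  have hgne : φ ((x, t).1 + ε * (x, t).2, (x, t).2) ≠ 0 := ne_of_gt (hpos _ _)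
  have hh : HasFDerivAt (fun p : ℝ × ℝ => φ (p.1 + ε * p.2, p.2) ^ (1 - m) - ε)
      (((1 - m) * u ^ (1 - m - 1)) • (L.comp A)) (x, t) := by
    have := (hg.rpow_const (p := 1 - m) (Or.inl hgne)).sub_const ε
    convert this using 2
  -- derivative of ψ
  have hhval : φ ((x, t).1 + ε * (x, t).2, (x, t).2) ^ (1 - m) - ε = h₀ := rfl
  have hhne : φ ((x, t).1 + ε * (x, t).2, (x, t).2) ^ (1 - m) - ε ≠ 0 := ne_of_gt hpt
  set M := ((1 / (1 - m)) * h₀ ^ (1 / (1 - m) - 1)) •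
      (((1 - m) * u ^ (1 - m - 1)) • (L.comp A)) with hM
  have hψd : HasFDerivAt ψ M (x, t) := by
    rw [hψ]
    have := hh.rpow_const (p := 1 / (1 - m)) (Or.inl hhne)
    rw [hhval] at this
    exact this
  refine ⟨hψd.differentiableAt, ?_⟩
  have hfd : fderiv ℝ ψ (x, t) = M := hψd.fderiv
  -- evaluate M on the two directions
  have hM01 : M (0, 1) = (1 / (1 - m)) * h₀ ^ (1 / (1 - m) - 1) *
      ((1 - m) * u ^ (1 - m - 1) * (ε * L (1, 0) + L (0, 1))) := by
    have hA01 : A (0, 1) = (ε, 1) := by rw [hAapp]; norm_num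
    have : L (ε, 1) = ε * L (1, 0) + L (0, 1) := by
      have : (ε, (1:ℝ)) = ε • ((1:ℝ), (0:ℝ)) + ((0:ℝ), (1:ℝ)) := by
        simp [Prod.ext_iff]
      rw [this, map_add, map_smul]; simp [smul_eq_mul]
    simp [hM, ContinuousLinearMap.comp_apply, hA01, this, smul_eq_mul]
  have hM10 : M (1, 0) = (1 / (1 - m)) * h₀ ^ (1 / (1 - m) - 1) *
      ((1 - m) * u ^ (1 - m - 1) * L (1, 0)) := by
    have hA10 : A (1, 0) = (1, 0) := by rw [hAapp]; norm_num
    simp [hM, ContinuousLinearMap.comp_apply, hA10, smul_eq_mul]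
  -- value of ψ and its powers
  have hψval : ψ (x, t) = h₀ ^ (1 / (1 - m)) := by rw [hψ]
  have h1m : (1 : ℝ) - m ≠ 0 := sub_ne_zero.mpr (Ne.symm hm)
  have hψpow1 : ψ (x, t) ^ (1 - m) = h₀ := by
    rw [hψval, ← Real.rpow_mul hh0pos.le, one_div, inv_mul_cancel₀ h1m, Real.rpow_one]
  have hψpowm : ψ (x, t) ^ m = h₀ ^ (1 / (1 - m) - 1) := by
    rw [hψval, ← Real.rpow_mul hh0pos.le]
    congr 1
    field_simp
    ring
  -- final algebra
  have hsol' := hsol y t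
  rw [← hL, ← hu] at hsol'
  have hQ : L (0, 1) = -(u ^ (1 - m) * L (1, 0) + lam * u ^ m) := by linarith
  have he : (1 : ℝ) - m - 1 = -m := by ring
  have hAmne : u ^ m ≠ 0 := (Real.rpow_pos_of_pos hupos m).ne'
  rw [hfd, hM01, hM10, hψpow1, hψpowm, hQ, hh0, he, Real.rpow_neg hupos.le]
  field_simp
  ring
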